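/- If X : [t₀, T) → M_n(ℝ) solves X'(t) + A(t)·X(t) + X(t)·B(t) = F(t), X(t) is invertible for all t, and tr(X(t)⁻¹·F(t)) = tr(A(t)) + tr(B(t)) for all t, then det X(t) = det X₀ is constant on [t₀, T). -/

import Mathlib

open Matrix

lemma det_updateColumn_leibniz {n : ℕ} (M M' : Matrix (Fin n) (Fin n) ℝ) (i : Fin n) :
    (M.updateCol i (fun k => M' k i)).det
      = ∑ σ : Equiv.Perm (Fin n), ((Equiv.Perm.sign σ : ℤ) : ℝ) *
          ((∏ j ∈ Finset.univ.erase i, M (σ j) j) * M' (σ i) i) := by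
  rw [Matrix.det_apply']
  refine Finset.sum_congr rfl fun σ _ => ?_
  congr 1
  rw [← Finset.mul_prod_erase Finset.univ _ (Finset.mem_univ i), Matrix.updateCol_self,
    mul_comm]
  congr 1
  refine Finset.prod_congr rfl fun j hj => ?_
  rw [Matrix.updateCol_apply, if_neg (Finset.ne_of_mem_erase hj)]

lemma hasDerivAt_det_aux {n : ℕ} (X : ℝ → Matrix (Fin n) (Fin n) ℝ)
    (X' : Matrix (Fin n) (Fin n) ℝ) (t : ℝ)
    (h : ∀ i j, HasDerivAt (fun s => X s i j) (X' i j) t) :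
    HasDerivAt (fun s => (X s).det)
      (∑ i, ((X t).updateCol i (fun k => X' k i)).det) t := by
  have key : HasDerivAt (fun s => ∑ σ : Equiv.Perm (Fin n),
        ((Equiv.Perm.sign σ : ℤ) : ℝ) * ∏ j, X s (σ j) j)
      (∑ σ : Equiv.Perm (Fin n), ((Equiv.Perm.sign σ : ℤ) : ℝ) *
        ∑ i, (∏ j ∈ Finset.univ.erase i, X t (σ j) j) • X' (σ i) i) t := by
    refine HasDerivAt.fun_sum fun σ _ => ?_
    exact (HasDerivAt.fun_finsetProd (fun j _ => h (σ j) j)).const_mul _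
  have e1 : (fun s => (X s).det)
      = fun s => ∑ σ : Equiv.Perm (Fin n), ((Equiv.Perm.sign σ : ℤ) : ℝ) * ∏ j, X s (σ j) j := by
    funext s; rw [Matrix.det_apply']
  rw [e1]
  convert key using 1
  simp_rw [Finset.mul_sum]
  rw [Finset.sum_comm]
  refine Finset.sum_congr rfl fun i _ => ?_
  rw [det_updateColumn_leibniz]
  refine Finset.sum_congr rfl fun σ _ => ?_
  simp [smul_eq_mul]

lemma sum_det_updateColumn_eq {n : ℕ} (M M' : Matrix (Fin n) (Fin n) ℝ) (hM : IsUnit M) :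
    (∑ i, (M.updateCol i (fun k => M' k i)).det) = (M⁻¹ * M').trace * M.det := by
  have hdet : IsUnit M.det := (Matrix.isUnit_iff_isUnit_det M).mp hM
  have hMM' : M * (M⁻¹ * M') = M' := by
    rw [← mul_assoc, Matrix.mul_nonsing_inv _ hdet, one_mul]
  have hcol : ∀ i, (fun k => M' k i) = fun k => ∑ j, (M⁻¹ * M') j i • M k j := by
    intro i; funext k
    conv_lhs => rw [← hMM']
    simp [Matrix.mul_apply, mul_comm]
  have : ∀ i, (M.updateCol i (fun k => M' k i)).det = (M⁻¹ * M') i i * M.det := by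
    intro i
    rw [hcol i]
    have := Matrix.det_updateCol_sum M i (fun j => (M⁻¹ * M') j i)
    simpa [smul_eq_mul] using this
  rw [Finset.sum_congr rfl fun i _ => this i, ← Finset.sum_mul]
  rfl

theorem stmt_18 {n : ℕ} (t₀ T : ℝ) (X X' A B F : ℝ → Matrix (Fin n) (Fin n) ℝ)
    (X₀ : Matrix (Fin n) (Fin n) ℝ)
    (hA : ContinuousOn A (Set.Ico t₀ T)) (hB : ContinuousOn B (Set.Ico t₀ T))
    (hF : ContinuousOn F (Set.Ico t₀ T))
    (hX : ∀ t ∈ Set.Ico t₀ T, ∀ i j, HasDerivAt (fun s => X s i j) (X' t i j) t)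
    (hInv : ∀ t ∈ Set.Ico t₀ T, IsUnit (X t))
    (hODE : ∀ t ∈ Set.Ico t₀ T, X' t + A t * X t + X t * B t = F t)
    (hX0 : X t₀ = X₀)
    (htr : ∀ t ∈ Set.Ico t₀ T, ((X t)⁻¹ * F t).trace = (A t).trace + (B t).trace) :
    ∀ t ∈ Set.Ico t₀ T, (X t).det = X₀.det := by
  intro t ht
  set s := Set.Ico t₀ T with hs
  have ht₀ : t₀ ∈ s := ⟨le_refl _, lt_of_le_of_lt ht.1 ht.2⟩
  -- the candidate derivative
  set g' : ℝ → ℝ := fun u => ((X u)⁻¹ * X' u).trace * (X u).det with hg'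
  have hderiv : ∀ u ∈ s, HasDerivWithinAt (fun v => (X v).det) (g' u) s u := by
    intro u hu
    have h1 := hasDerivAt_det_aux X (X' u) u (hX u hu)
    rw [sum_det_updateColumn_eq (X u) (X' u) (hInv u hu)] at h1
    exact h1.hasDerivWithinAt
  have hzero : ∀ u ∈ s, g' u = 0 := by
    intro u hu
    have hdet : IsUnit (X u).det := (Matrix.isUnit_iff_isUnit_det (X u)).mp (hInv u hu)
    have hX' : X' u = F u - A u * X u - X u * B u := by
      have := hODE u hu; linear_combination (norm := module) this
    have htr0 : ((X u)⁻¹ * X' u).trace = 0 := by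
      rw [hX', Matrix.mul_sub, Matrix.mul_sub, Matrix.trace_sub, Matrix.trace_sub, htr u hu]
      have h2 : ((X u)⁻¹ * (A u * X u)).trace = (A u).trace := by
        rw [Matrix.trace_mul_comm, mul_assoc, Matrix.mul_nonsing_inv _ hdet, mul_one]
      have h3 : ((X u)⁻¹ * (X u * B u)).trace = (B u).trace := by
        rw [← mul_assoc, Matrix.nonsing_inv_mul _ hdet, one_mul]
      rw [h2, h3]; ring
    simp [hg', htr0]
  have hbound : ∀ u ∈ s, ‖g' u‖ ≤ 0 := fun u hu => by rw [hzero u hu]; simp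
  have hconv : Convex ℝ s := convex_Ico t₀ T
  have := hconv.norm_image_sub_le_of_norm_hasDerivWithin_le hderiv hbound ht₀ ht
  simp only [zero_mul] at this
  have : (X t).det - (X t₀).det = 0 := by
    have h := norm_le_zero_iff.mp this
    simpa using h
  rw [hX0] at this
  linarith [this]
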